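/- Fix prior channel moments m2 > 0 and m4 > 0 (representing E[|h|²] and E[|h|⁴]). Then the MVU filter f_MVU = x/‖x‖² is a global minimizer of the zeroth-order excess MSE for the ZF equalizer with random channel: for every nonzero filter f ∈ ℂ^B, Me_rc(f_MVU) ≤ Me_rc(f). (Proposition 4: the MVU is an optimal channel estimator for minimizing [MSE_xe^rc(ZF)]_0.) -/

import Mathlib

open MeasureTheory

/-- `φ(f) = fᴴ x = Σᵢ conj(fᵢ)·xᵢ`. -/
noncomputable def phi {B : ℕ} (x f : Fin B → ℂ) : ℂ :=
  ∑ i, (starRingEnd ℂ) (f i) * x i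

/-- Squared Euclidean norm `‖f‖² = Σᵢ |fᵢ|²`. -/
noncomputable def nsq {B : ℕ} (f : Fin B → ℂ) : ℝ :=
  ∑ i, Complex.normSq (f i)

/-- Zeroth-order excess MSE of the ZF equalizer, random channel with prior
moments `m2 = E[|h|²]` and `m4 = E[|h|⁴]`. -/
noncomputable def MeRc {B : ℕ} (σx2 σw2 m2 m4 : ℝ) (x f : Fin B → ℂ) : ℝ :=
  (Complex.normSq (phi x f - 1) * (m4 * σx2 + m2 * σw2) +
      σw2 * nsq f * (m2 * σx2 + σw2)) /
    (m4 * Complex.normSq (phi x f) + m2 * σw2 * nsq f)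

/-- The MVU channel-estimating filter `f_MVU = x / ‖x‖²`. -/
noncomputable def fMVU {B : ℕ} (x : Fin B → ℂ) : Fin B → ℂ :=
  fun i => x i / (nsq x : ℂ)

lemma nsq_pos {B : ℕ} {f : Fin B → ℂ} (hf : f ≠ 0) : 0 < nsq f := by
  have h : ∃ i, f i ≠ 0 := by
    by_contra h
    push_neg at h
    exact hf (funext h)
  obtain ⟨i, hi⟩ := h
  have : 0 < Complex.normSq (f i) := by
    simpa [Complex.normSq_pos] using hi
  exact Finset.sum_pos' (fun j _ => Complex.normSq_nonneg _)
    ⟨i, Finset.mem_univ i, this⟩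

lemma cauchy {B : ℕ} (x f : Fin B → ℂ) :
    Complex.normSq (phi x f) ≤ nsq f * nsq x := by
  have h1 : ‖phi x f‖ ≤ ∑ i, ‖f i‖ * ‖x i‖ := by
    refine (norm_sum_le _ _).trans_eq ?_
    simp [norm_mul, Complex.norm_conj]
  have h2 : (∑ i, ‖f i‖ * ‖x i‖) ^ 2 ≤
      (∑ i, ‖f i‖ ^ 2) * ∑ i, ‖x i‖ ^ 2 :=
    Finset.sum_mul_sq_le_sq_mul_sq _ _ _
  have h3 : Complex.normSq (phi x f) = ‖phi x f‖ ^ 2 :=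
    (Complex.sq_norm _).symm
  have h4 : nsq f = ∑ i, ‖f i‖ ^ 2 := by
    simp [nsq, Complex.sq_norm]
  have h5 : nsq x = ∑ i, ‖x i‖ ^ 2 := by
    simp [nsq, Complex.sq_norm]
  rw [h3, h4, h5]
  calc ‖phi x f‖ ^ 2
      ≤ (∑ i, ‖f i‖ * ‖x i‖) ^ 2 := by
        apply pow_le_pow_left₀ (norm_nonneg _) h1
    _ ≤ _ := h2

/-- Proposition 4: the MVU filter is a global minimizer of the zeroth-order
excess MSE `[MSE_xe^rc(ZF)]₀` for a random channel. -/
theorem mvu_optimal_zeroth_order_excess_mse_rc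
    (B : ℕ) (hB : 1 ≤ B) (x : Fin B → ℂ) (hx : x ≠ 0)
    (σx2 σw2 : ℝ) (hσx : 0 < σx2) (hσw : 0 < σw2)
    (m2 m4 : ℝ) (hm2 : 0 < m2) (hm4 : 0 < m4) :
    ∀ f : Fin B → ℂ, f ≠ 0 →
      MeRc σx2 σw2 m2 m4 x (fMVU x) ≤ MeRc σx2 σw2 m2 m4 x f := by
  intro f hf
  have hP : 0 < nsq x := nsq_pos hx
  have hPne : (nsq x : ℂ) ≠ 0 := by exact_mod_cast hP.ne'
  have hn : 0 < nsq f := nsq_pos hf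
  have hphi : phi x (fMVU x) = 1 := by
    unfold phi fMVU
    have : ∀ i, (starRingEnd ℂ) (x i / (nsq x : ℂ)) * x i
        = ((Complex.normSq (x i) : ℂ)) / (nsq x : ℂ) := by
      intro i
      rw [map_div₀, Complex.conj_ofReal, div_mul_eq_mul_div,
        ← Complex.normSq_eq_conj_mul_self]
    rw [Finset.sum_congr rfl (fun i _ => this i), ← Finset.sum_div]
    rw [show (∑ i, (Complex.normSq (x i) : ℂ)) = ((nsq x : ℝ) : ℂ) by
      simp [nsq]]
    exact div_self hPne
  have hnsqf : nsq (fMVU x) = 1 / nsq x := by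
    unfold nsq fMVU
    have : ∀ i, Complex.normSq (x i / (nsq x : ℂ))
        = Complex.normSq (x i) / (nsq x)^2 := by
      intro i
      rw [Complex.normSq_div, Complex.normSq_ofReal, sq]
    rw [Finset.sum_congr rfl (fun i _ => this i), ← Finset.sum_div]
    rw [show (∑ i, Complex.normSq (x i)) = nsq x from rfl]
    field_simp
  have hcs := cauchy x f
  unfold MeRc
  rw [hphi, hnsqf]
  simp only [sub_self, Complex.normSq_zero, Complex.normSq_one]
  set a := Complex.normSq (phi x f - 1) with ha
  set b := Complex.normSq (phi x f) with hb
  have ha0 : 0 ≤ a := Complex.normSq_nonneg _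
  have hb0 : 0 ≤ b := Complex.normSq_nonneg _
  have key : 0 ≤ a * (m4 * σx2 + m2 * σw2) * (m4 * nsq x + m2 * σw2)
      + σw2 * (m2 * σx2 + σw2) * m4 * (nsq f * nsq x - b) := by
    have h1 : 0 ≤ nsq f * nsq x - b := by linarith
    positivity
  have hd1 : 0 < m4 * nsq x + m2 * σw2 := by positivity
  have hd2 : 0 < m4 * b + m2 * σw2 * nsq f := by positivity
  have hP' := hP.ne'
  have hL : (0 * (m4 * σx2 + m2 * σw2) + σw2 * (1 / nsq x) * (m2 * σx2 + σw2)) /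
      (m4 * 1 + m2 * σw2 * (1 / nsq x)) =
      σw2 * (m2 * σx2 + σw2) / (m4 * nsq x + m2 * σw2) := by
    rw [div_eq_div_iff (by positivity) hd1.ne']
    field_simp
    ring
  rw [hL, div_le_div_iff₀ hd1 hd2]
  nlinarith [key, ha0, hb0]
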